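/- The 4-dimensional complex algebras A(α) with basis e1,e2,e3,e4 and nonzero products e1e1 = e2, e1e3 = e4, e2e1 = e3, e2e2 = α e4, e3e1 = −2e4 (for α ∈ ℂ) are pairwise non-isomorphic nilpotent CD-algebras: A(α) ≅ A(α') implies α = α'. -/

import Mathlib

/-- The three degree-4 identities defining a CD-algebra. -/
def IsCD {A : Type*} [AddCommGroup A] (m : A → A → A) : Prop :=
  (∀ a b x y : A,
      m (m (m x y) a) b - m (m (m x y) b) a =
        m (m (m x a) b - m (m x b) a) y + m x (m (m y a) b - m (m y b) a)) ∧
  (∀ a b x y : A,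
      m (m a (m x y)) b - m a (m (m x y) b) =
        m (m (m a x) b - m a (m x b)) y + m x (m (m a y) b - m a (m y b))) ∧
  (∀ a b x y : A,
      m a (m b (m x y)) - m b (m a (m x y)) =
        m (m a (m b x) - m b (m a x)) y + m x (m a (m b y) - m b (m a y)))

/-- The CD-cocycle conditions for a map `θ : A × A → V`. -/
def IsCDCocycle {A V : Type*} [AddCommGroup A] [AddCommGroup V]
    (m : A → A → A) (θ : A → A → V) : Prop :=
  (∀ a b x y : A,
      θ (m (m x y) a) b - θ (m (m x y) b) a =
        θ (m (m x a) b - m (m x b) a) y + θ x (m (m y a) b - m (m y b) a)) ∧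
  (∀ a b x y : A,
      θ (m a (m x y)) b - θ a (m (m x y) b) =
        θ (m (m a x) b - m a (m x b)) y + θ x (m (m a y) b - m a (m y b))) ∧
  (∀ a b x y : A,
      θ a (m b (m x y)) - θ b (m a (m x y)) =
        θ (m a (m b x) - m b (m a x)) y + θ x (m a (m b y) - m b (m a y)))

/-- Evaluation of a nonassociative word in `A` under the multiplication `m`. -/
def magEval {A : Type*} (m : A → A → A) : FreeMagma A → A
  | FreeMagma.of a => a
  | FreeMagma.mul x y => m (magEval m x) (magEval m y)

/-- The number of letters of a nonassociative word. -/
def magLen {A : Type*} : FreeMagma A → ℕ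
  | FreeMagma.of _ => 1
  | FreeMagma.mul x y => magLen x + magLen y

/-- An algebra is nilpotent iff all sufficiently long products vanish. -/
def IsNilpotentMul {A : Type*} [AddCommGroup A] (m : A → A → A) : Prop :=
  ∃ n : ℕ, ∀ w : FreeMagma A, n ≤ magLen w → magEval m w = 0

/-- The family A(α): e1e1 = e2, e1e3 = e4, e2e1 = e3, e2e2 = αe4, e3e1 = -2e4. -/
noncomputable def mulC408 (a : ℂ) (u v : Fin 4 → ℂ) : Fin 4 → ℂ :=
  Pi.single (1 : Fin 4) (u 0 * v 0) + Pi.single (2 : Fin 4) (u 1 * v 0) +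
    Pi.single (3 : Fin 4) (u 0 * v 2 + a * (u 1 * v 1) - 2 * (u 2 * v 0))

/- Auxiliary component lemmas. -/
lemma mC0 (a : ℂ) (u v : Fin 4 → ℂ) : mulC408 a u v 0 = 0 := by
  simp [mulC408, Pi.single_apply]
lemma mC1 (a : ℂ) (u v : Fin 4 → ℂ) : mulC408 a u v 1 = u 0 * v 0 := by
  simp [mulC408, Pi.single_apply]
lemma mC2 (a : ℂ) (u v : Fin 4 → ℂ) : mulC408 a u v 2 = u 1 * v 0 := by
  simp [mulC408, Pi.single_apply]
lemma mC3 (a : ℂ) (u v : Fin 4 → ℂ) :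
    mulC408 a u v 3 = u 0 * v 2 + a * (u 1 * v 1) - 2 * (u 2 * v 0) := by
  simp [mulC408, Pi.single_apply]

/-- A filtration degree predicate: all coordinates of index `< k - 1` vanish. -/
def degC (k : ℕ) (u : Fin 4 → ℂ) : Prop := ∀ i : Fin 4, (i : ℕ) + 1 < k → u i = 0

lemma degC_mul (a : ℂ) {j k : ℕ} {u v : Fin 4 → ℂ}
    (hu : degC j u) (hv : degC k v) : degC (j + k) (mulC408 a u v) := by
  intro i hi
  fin_cases i
  · exact mC0 a u v
  · show mulC408 a u v 1 = 0
    rw [mC1]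
    have hi : 2 < j + k := by simpa using hi
    rcases le_or_gt 2 j with h | h
    · rw [hu 0 (by simp; omega), zero_mul]
    · rw [hv 0 (by omega), mul_zero]
  · show mulC408 a u v 2 = 0
    rw [mC2]
    have hi : 3 < j + k := by simpa using hi
    rcases le_or_gt 3 j with h | h
    · rw [hu 1 (by simp; omega), zero_mul]
    · rw [hv 0 (by omega), mul_zero]
  · show mulC408 a u v 3 = 0
    rw [mC3]
    have hi : 4 < j + k := by simpa using hi
    have t1 : u 0 * v 2 = 0 := by
      rcases le_or_gt 2 j with h | h
      · rw [hu 0 (by simp; omega), zero_mul]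
      · rw [hv 2 (by omega), mul_zero]
    have t2 : u 1 * v 1 = 0 := by
      rcases le_or_gt 3 j with h | h
      · rw [hu 1 (by simp; omega), zero_mul]
      · rw [hv 1 (by omega), mul_zero]
    have t3 : u 2 * v 0 = 0 := by
      rcases le_or_gt 4 j with h | h
      · rw [hu 2 (by simp; omega), zero_mul]
      · rw [hv 0 (by omega), mul_zero]
    rw [t1, t2, t3]; ring

lemma degC_eval (a : ℂ) (w : FreeMagma (Fin 4 → ℂ)) :
    degC (magLen w) (magEval (mulC408 a) w) := by
  induction w using FreeMagma.rec with
  | of u => exact fun i hi => absurd hi (by simp [magLen])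
  | mul x y ihx ihy => exact degC_mul a ihx ihy

/-- The algebras A(α) are pairwise non-isomorphic nilpotent CD-algebras. -/
theorem C408_nilpotent_CD_pairwise_noniso :
    (∀ a : ℂ, IsCD (mulC408 a) ∧ IsNilpotentMul (mulC408 a)) ∧
      ∀ a a' : ℂ,
        (∃ φ : (Fin 4 → ℂ) ≃ₗ[ℂ] (Fin 4 → ℂ),
          ∀ u v : Fin 4 → ℂ, φ (mulC408 a u v) = mulC408 a' (φ u) (φ v)) → a = a' := by
  constructor
  · intro al
    refine ⟨⟨?_, ?_, ?_⟩, 5, ?_⟩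
    · intro a b x y
      funext i
      fin_cases i <;> simp [mulC408, Pi.single_apply] <;> ring
    · intro a b x y
      funext i
      fin_cases i <;> simp [mulC408, Pi.single_apply] <;> ring
    · intro a b x y
      funext i
      fin_cases i <;> simp [mulC408, Pi.single_apply] <;> ring
    · intro w hw
      funext i
      simp only [Pi.zero_apply]
      exact degC_eval al w i (by have := i.isLt; omega)
  · rintro a a' ⟨φ, hφ⟩
    set e1 : Fin 4 → ℂ := Pi.single 0 1 with he1
    set e2 : Fin 4 → ℂ := Pi.single 1 1 with he2
    set e3 : Fin 4 → ℂ := Pi.single 2 1 with he3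
    set e4 : Fin 4 → ℂ := Pi.single 3 1 with he4
    have m12 : e2 = mulC408 a e1 e1 := by
      funext i; fin_cases i <;> simp [he1, he2, mulC408, Pi.single_apply]
    have m13 : e3 = mulC408 a e2 e1 := by
      funext i; fin_cases i <;> simp [he1, he2, he3, mulC408, Pi.single_apply]
    have m14 : e4 = mulC408 a e1 e3 := by
      funext i; fin_cases i <;> simp [he1, he3, he4, mulC408, Pi.single_apply]
    have m15 : a • e4 = mulC408 a e2 e2 := by
      funext i; fin_cases i <;> simp [he2, he4, mulC408, Pi.single_apply]
    have h2 : φ e2 = mulC408 a' (φ e1) (φ e1) := by rw [m12, hφ]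
    have h3 : φ e3 = mulC408 a' (φ e2) (φ e1) := by rw [m13, hφ]
    have h4 : φ e4 = mulC408 a' (φ e1) (φ e3) := by rw [m14, hφ]
    have h5 : a • φ e4 = mulC408 a' (φ e2) (φ e2) := by rw [← map_smul, m15, hφ]
    have c20 : φ e2 0 = 0 := by rw [h2, mC0]
    have c21 : φ e2 1 = φ e1 0 * φ e1 0 := by rw [h2, mC1]
    have c22 : φ e2 2 = φ e1 1 * φ e1 0 := by rw [h2, mC2]
    have c30 : φ e3 0 = 0 := by rw [h3, mC0]
    have c31 : φ e3 1 = 0 := by rw [h3, mC1, c20, zero_mul]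
    have c32 : φ e3 2 = φ e1 0 * φ e1 0 * φ e1 0 := by rw [h3, mC2, c21]
    have c40 : φ e4 0 = 0 := by rw [h4, mC0]
    have c41 : φ e4 1 = 0 := by rw [h4, mC1, c30, mul_zero]
    have c42 : φ e4 2 = 0 := by rw [h4, mC2, c30, mul_zero]
    have c43 : φ e4 3 = φ e1 0 ^ 4 := by
      rw [h4, mC3, c30, c31, c32]; ring
    have hp : φ e1 0 ≠ 0 := by
      intro h0
      have hz : φ e4 = 0 := by
        funext i
        simp only [Pi.zero_apply]
        fin_cases i
        · exact c40
        · exact c41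
        · exact c42
        · show φ e4 3 = 0
          rw [c43, h0]; ring
      have he : e4 = 0 := φ.injective (by rw [hz, map_zero])
      have h30 := congrFun he 3
      rw [he4] at h30
      simp [Pi.single_apply] at h30
    have key : a * φ e1 0 ^ 4 = a' * φ e1 0 ^ 4 := by
      have h53 := congrFun h5 3
      simp only [Pi.smul_apply, smul_eq_mul, mC3] at h53
      rw [c20, c21, c22, c43] at h53
      linear_combination h53
    exact mul_right_cancel₀ (pow_ne_zero 4 hp) key
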